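/- Let G be a topological group such that the abelianization of G is compact, i.e. the quotient topological group of G by the closure of its commutator subgroup is compact. Let E be a Hausdorff topological real vector space equipped with an ℝ-linear action of G whose action map G × E → E is continuous (a continuous G-module). Let d ≥ 1 and let ξ ∈ E satisfy (∂_{g₁} ∘ ⋯ ∘ ∂_{g_d})(ξ) = 0 for all g₁, …, g_d ∈ G, where ∂_g ξ := g•ξ − ξ ∈ E. Then g•ξ = ξ for all g ∈ G. (For groups with compact abelianization, the higher order invariants E^{G(d)} coincide with the invariants E^G for every continuous G-module E.) -/

import Mathlib

open Filter Topology

theorem key16 {G : Type*} [Group G] [TopologicalSpace G] [IsTopologicalGroup G]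
    (hcomp : CompactSpace (G ⧸ (commutator G).topologicalClosure))
    {E : Type*} [AddCommGroup E] [Module ℝ E] [TopologicalSpace E] [T2Space E]
    [IsTopologicalAddGroup E] [ContinuousSMul ℝ E]
    [DistribMulAction G E] [SMulCommClass G ℝ E] [ContinuousSMul G E]
    (ξ : E) (h2 : ∀ a b : G, a • (b • ξ - ξ) - (b • ξ - ξ) = 0) :
    ∀ g : G, g • ξ = ξ := by
  set φ : G → E := fun g => g • ξ - ξ with hφ
  have hinv : ∀ a b : G, a • φ b = φ b := by
    intro a b
    have := h2 a b
    rw [sub_eq_zero] at this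
    simpa [hφ] using this
  have hcont : Continuous φ := (continuous_id.smul continuous_const).sub continuous_const
  have hmul : ∀ a b : G, φ (a * b) = φ a + φ b := by
    intro a b
    have h1 : φ (a * b) = a • φ b + φ a := by
      simp only [hφ, mul_smul, smul_sub]
      abel
    rw [h1, hinv a b]
    abel
  have hone : φ 1 = 0 := by simp [hφ]
  -- φ as a monoid hom into `Multiplicative E`
  let ψ : G →* Multiplicative E :=
    { toFun := fun g => Multiplicative.ofAdd (φ g)
      map_one' := by simp [hone]
      map_mul' := fun a b => by simp [hmul a b] }
  have hker : (commutator G).topologicalClosure ≤ ψ.ker := by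
    apply Subgroup.topologicalClosure_minimal
    · exact Abelianization.commutator_subset_ker ψ
    · have : (ψ.ker : Set G) = φ ⁻¹' {0} := by
        ext g
        simp [MonoidHom.mem_ker, ψ]
      rw [this]
      exact isClosed_singleton.preimage hcont
  have hφker : ∀ g ∈ (commutator G).topologicalClosure, φ g = 0 := by
    intro g hg
    exact hker hg
  set N := (commutator G).topologicalClosure with hN
  -- descend φ to the quotient
  have hconst : ∀ a b : G, (QuotientGroup.leftRel N) a b → φ a = φ b := by
    intro a b hab
    rw [QuotientGroup.leftRel_apply] at hab
    have : φ b = φ (a * (a⁻¹ * b)) := by rw [mul_inv_cancel_left]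
    rw [this, hmul, hφker _ hab, add_zero]
  let F : G ⧸ N → E := Quotient.lift φ hconst
  have hFcont : Continuous F := hcont.quotient_lift hconst
  have hFφ : ∀ g : G, F (QuotientGroup.mk g) = φ g := fun g => rfl
  haveI := hcomp
  have hK : IsCompact (Set.range F) := isCompact_range hFcont
  -- powers
  have hpow : ∀ (g : G) (n : ℕ), φ (g ^ n) = n • φ g := by
    intro g n
    induction n with
    | zero => simpa using hone
    | succ k ih => rw [pow_succ, hmul, ih, succ_nsmul]
  intro g
  have hv : ∀ n : ℕ, ((n : ℝ)) • φ g ∈ Set.range F := by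
    intro n
    rw [Nat.cast_smul_eq_nsmul, ← hpow g n]
    exact ⟨QuotientGroup.mk (g ^ n), rfl⟩
  -- ultrafilter argument: φ g = 0
  set x : ℕ → E := fun n => ((n + 1 : ℕ) : ℝ) • φ g with hx
  set ε : ℕ → ℝ := fun n => (((n + 1 : ℕ) : ℝ))⁻¹ with hε
  let U : Ultrafilter ℕ := Ultrafilter.of atTop
  have hUle : (U : Filter ℕ) ≤ atTop := Ultrafilter.of_le atTop
  have hxK : ∀ n, x n ∈ Set.range F := fun n => hv (n + 1)
  obtain ⟨w, _, hw⟩ := hK.ultrafilter_le_nhds (U.map x) (by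
    rw [Ultrafilter.coe_map]
    exact Filter.le_principal_iff.mpr
      (Filter.mem_map.mpr (Filter.univ_mem' hxK)))
  have hxw : Tendsto x U (𝓝 w) := hw
  have hε0 : Tendsto ε U (𝓝 0) := by
    refine Tendsto.mono_left ?_ hUle
    have : Tendsto (fun n : ℕ => ((n : ℝ) + 1)⁻¹) atTop (𝓝 0) :=
      tendsto_one_div_add_atTop_nhds_zero_nat.congr (by intro n; rw [one_div])
    refine this.congr ?_
    intro n
    simp [hε]
  have hsm := hε0.smul hxw
  rw [zero_smul] at hsm
  have hconst' : (fun n => ε n • x n) = fun _ => φ g := by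
    funext n
    rw [hε, hx]
    simp only []
    rw [inv_smul_smul₀ (by positivity)]
  rw [hconst'] at hsm
  have : φ g = 0 := tendsto_nhds_unique tendsto_const_nhds hsm
  rw [hφ] at this
  exact sub_eq_zero.mp this

/-- For a group `G` with compact abelianization (compact quotient by the closure of
the commutator subgroup) and any continuous `G`-module `E`, the higher order
invariants coincide with the invariants: any `ξ ∈ E` all of whose `d`-fold iterated
differences `∂_g ξ = g • ξ - ξ` vanish is `G`-fixed. -/
theorem stmt16 {G : Type*} [Group G] [TopologicalSpace G] [IsTopologicalGroup G]
    (hcomp : CompactSpace (G ⧸ (commutator G).topologicalClosure))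
    {E : Type*} [AddCommGroup E] [Module ℝ E] [TopologicalSpace E] [T2Space E]
    [IsTopologicalAddGroup E] [ContinuousSMul ℝ E]
    [DistribMulAction G E] [SMulCommClass G ℝ E] [ContinuousSMul G E]
    (d : ℕ) (hd : 1 ≤ d) (ξ : E)
    (h : ∀ gs : List G, gs.length = d →
      gs.foldr (fun g x => g • x - x) ξ = 0) :
    ∀ g : G, g • ξ = ξ := by
  induction d with
  | zero => omega
  | succ k ih =>
    rcases Nat.lt_or_ge k 1 with hk | hk
    · -- k = 0, d = 1
      interval_cases k
      intro g
      have := h [g] rfl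
      simp only [List.foldr] at this
      rw [sub_eq_zero] at this
      exact this
    · -- k ≥ 1
      apply ih hk
      intro gs hgs
      obtain ⟨g₀, rest, rfl⟩ : ∃ g₀ rest, gs = g₀ :: rest := by
        cases gs with
        | nil => simp at hgs; omega
        | cons a l => exact ⟨a, l, rfl⟩
      · set η : E := rest.foldr (fun g x => g • x - x) ξ with hη
        have h2 : ∀ a b : G, a • (b • η - η) - (b • η - η) = 0 := by
          intro a b
          have := h (a :: b :: rest) (by simp at hgs ⊢; omega)
          simpa [hη] using this
        have hfix := key16 hcomp η h2 g₀
        simp only [List.foldr, ← hη]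
        rw [hfix, sub_self]
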